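/- Let G be a finite group, let X and Y be compact Hausdorff based G-spaces with G-fixed basepoints, let H be a complex Hilbert space with a unitary representation u of G, and let G act on 𝔠(X) and 𝔠(Y) by (g·F)(f) = u(g) ∘ F(x ↦ f(g • x)) ∘ u(g)⁻¹. If φ₀, φ₁ : X → Y are based G-equivariant continuous maps that are G-homotopic through based G-equivariant maps, then the induced continuous maps 𝔠(φ₀), 𝔠(φ₁) : 𝔠(X) → 𝔠(Y), given by 𝔠(φᵢ)(F) = F ∘ φᵢ*, are G-homotopic: there is a continuous map Ĥ : 𝔠(X) × [0,1] → 𝔠(Y) with Ĥ(·, 0) = 𝔠(φ₀), Ĥ(·, 1) = 𝔠(φ₁), and Ĥ(g·F, t) = g·Ĥ(F, t) for all g ∈ G, F ∈ 𝔠(X), t ∈ [0,1]. -/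

import Mathlib

set_option synthInstance.maxHeartbeats 400000

noncomputable section

/-- The non-unital star subalgebra `C₀(X)` of `C(X, ℂ)` consisting of the continuous functions
vanishing at the basepoint `x₀`. -/
def zeroAt (X : Type*) [TopologicalSpace X] (x₀ : X) :
    NonUnitalStarSubalgebra ℂ C(X, ℂ) where
  carrier := {f | f x₀ = 0}
  add_mem' := by intro f g hf hg; simp_all [Set.mem_setOf_eq]
  zero_mem' := by simp
  mul_mem' := by intro f g hf hg; simp_all [Set.mem_setOf_eq]
  smul_mem' := by intro c f hf; simp_all [Set.mem_setOf_eq]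
  star_mem' := by intro f hf; simp_all [Set.mem_setOf_eq]

/-- `C₀(X)` for the based space `(X, x₀)`, with the sup-norm (compact-open) topology inherited
from `C(X, ℂ)`. -/
abbrev CZero (X : Type*) [TopologicalSpace X] (x₀ : X) : Type _ := ↥(zeroAt X x₀)

variable (H : Type*) [NormedAddCommGroup H] [InnerProductSpace ℂ H] [CompleteSpace H]

/-- A continuous map `F : C₀(X) → B(H)` (with `B(H)` carrying the weak operator topology) is a
*configuration* if it is a (not necessarily unital) star-algebra homomorphism of uniformly
bounded finite rank. -/
def IsConfig {X : Type*} [TopologicalSpace X] {x₀ : X}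
    (F : C(CZero X x₀, H →WOT[ℂ] H)) : Prop :=
  ∃ Φ : CZero X x₀ →⋆ₙₐ[ℂ] (H →L[ℂ] H),
    (∀ f, F f = (ContinuousLinearMapWOT.linearEquiv (σ := RingHom.id ℂ) (E := H) (F := H) ℂ).symm (Φ f)) ∧
    ∃ n : ℕ, ∀ f, ∃ V : Submodule ℂ H, FiniteDimensional ℂ V ∧
      Module.finrank ℂ V ≤ n ∧ LinearMap.range ((Φ f) : H →ₗ[ℂ] H) ≤ V

/-- The configuration space `𝔠(X)`: bounded-rank star-algebra homomorphisms
`C₀(X) → B(H)`, topologized as a subspace of `C(C₀(X), B(H))` with the compact-open topology,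
`B(H)` carrying the weak operator topology. -/
def Config (X : Type*) [TopologicalSpace X] (x₀ : X) : Type _ :=
  {F : C(CZero X x₀, H →WOT[ℂ] H) // IsConfig H F}

instance (X : Type*) [TopologicalSpace X] (x₀ : X) : TopologicalSpace (Config H X x₀) :=
  instTopologicalSpaceSubtype

/-- Pullback of functions vanishing at basepoints along a based continuous map. -/
def pullback {X Y : Type*} [TopologicalSpace X] [TopologicalSpace Y] {x₀ : X} {y₀ : Y}
    (φ : C(X, Y)) (hφ : φ x₀ = y₀) (f : CZero Y y₀) : CZero X x₀ :=
  ⟨(f : C(Y, ℂ)).comp φ, by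
    have hf : (f : C(Y, ℂ)) y₀ = 0 := f.2
    show ((f : C(Y, ℂ)).comp φ) x₀ = 0
    simp [ContinuousMap.comp_apply, hφ, hf]⟩

/-- The conjugation action of `g : G` on (underlying functions of) configurations:
`(g·F)(f) = u g ∘ F (x ↦ f (g • x)) ∘ u g⁻¹`. -/
def smulConf {G : Type*} [Group G] {X : Type*} [TopologicalSpace X] {x₀ : X}
    [MulAction G X] [ContinuousConstSMul G X]
    (u : G →* (H ≃ₗᵢ[ℂ] H)) (hfix : ∀ g : G, g • x₀ = x₀) (g : G)
    (F : CZero X x₀ → (H →WOT[ℂ] H)) : CZero X x₀ → (H →WOT[ℂ] H) := fun f =>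
  (ContinuousLinearMapWOT.linearEquiv (σ := RingHom.id ℂ) (E := H) (F := H) ℂ).symm
    ((((u g).toContinuousLinearEquiv : H →L[ℂ] H)).comp
      (((((ContinuousLinearMapWOT.linearEquiv (σ := RingHom.id ℂ) (E := H) (F := H) ℂ).symm).symm
          (F (pullback ⟨fun y => g • y, continuous_const_smul g⟩ (hfix g) f)))).comp
        (((u g⁻¹).toContinuousLinearEquiv : H →L[ℂ] H))))


section Stmt8Aux
variable {X Y : Type*} [TopologicalSpace X] [TopologicalSpace Y] {x₀ : X} {y₀ : Y}

lemma pullback_congr {φ φ' : C(X, Y)} (hφ : φ x₀ = y₀) (hφ' : φ' x₀ = y₀)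
    (h : ∀ x, φ x = φ' x) (f : CZero Y y₀) : pullback φ hφ f = pullback φ' hφ' f := by
  apply Subtype.ext
  ext x
  show (f : C(Y, ℂ)) (φ x) = (f : C(Y, ℂ)) (φ' x)
  rw [h x]

/-- Pullback as a non-unital star algebra homomorphism. -/
def pullbackHom (φ : C(X, Y)) (hφ : φ x₀ = y₀) : CZero Y y₀ →⋆ₙₐ[ℂ] CZero X x₀ where
  toFun := pullback φ hφ
  map_smul' c f := by apply Subtype.ext; ext x; simp [pullback]
  map_zero' := by apply Subtype.ext; ext x; simp [pullback]
  map_add' f g := by apply Subtype.ext; ext x; simp [pullback]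
  map_mul' f g := by apply Subtype.ext; ext x; simp [pullback]
  map_star' f := by apply Subtype.ext; ext x; simp [pullback]

end Stmt8Aux

/-- `G`-homotopy invariance of the configuration space functor: if two based
`G`-equivariant maps `φ₀, φ₁ : X → Y` are `G`-homotopic through based `G`-equivariant maps, then
the induced maps `𝔠(φ₀), 𝔠(φ₁) : 𝔠(X) → 𝔠(Y)` are `G`-homotopic, via a homotopy `Hht` which is
equivariant for the conjugation actions `(g·F)(f) = u g ∘ F (x ↦ f (g • x)) ∘ u g⁻¹`. -/
theorem stmt8
    {G : Type*} [Group G] [Finite G]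
    {X Y : Type*} [TopologicalSpace X] [CompactSpace X] [T2Space X]
    [TopologicalSpace Y] [CompactSpace Y] [T2Space Y]
    [MulAction G X] [ContinuousConstSMul G X] [MulAction G Y] [ContinuousConstSMul G Y]
    {x₀ : X} {y₀ : Y} (hx : ∀ g : G, g • x₀ = x₀) (hy : ∀ g : G, g • y₀ = y₀)
    (H : Type*) [NormedAddCommGroup H] [InnerProductSpace ℂ H] [CompleteSpace H]
    (u : G →* (H ≃ₗᵢ[ℂ] H))
    (φ₀ φ₁ : C(X, Y)) (hφ₀b : φ₀ x₀ = y₀) (hφ₁b : φ₁ x₀ = y₀)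
    (hφ₀e : ∀ (g : G) (x : X), φ₀ (g • x) = g • φ₀ x)
    (hφ₁e : ∀ (g : G) (x : X), φ₁ (g • x) = g • φ₁ x)
    (Φ : ContinuousMap.Homotopy φ₀ φ₁)
    (hΦb : ∀ t : unitInterval, Φ (t, x₀) = y₀)
    (hΦe : ∀ (t : unitInterval) (g : G) (x : X), Φ (t, g • x) = g • Φ (t, x)) :
    ∃ Hht : Config H X x₀ × unitInterval → Config H Y y₀,
      Continuous Hht ∧
      (∀ (F : Config H X x₀) (f : CZero Y y₀),
        (Hht (F, 0)).1 f = F.1 (pullback φ₀ hφ₀b f)) ∧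
      (∀ (F : Config H X x₀) (f : CZero Y y₀),
        (Hht (F, 1)).1 f = F.1 (pullback φ₁ hφ₁b f)) ∧
      (∀ (g : G) (t : unitInterval) (F F' : Config H X x₀),
        ⇑F'.1 = smulConf H u hx g ⇑F.1 →
        ⇑(Hht (F', t)).1 = smulConf H u hy g ⇑(Hht (F, t)).1) := by
  classical
  set ψ : unitInterval → C(X, Y) := fun t => Φ.toContinuousMap.curry t with hψdef
  have hψb : ∀ t : unitInterval, ψ t x₀ = y₀ := fun t => hΦb t
  have hQc : Continuous (fun p : unitInterval × CZero Y y₀ =>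
      ((p.2 : C(Y, ℂ)).comp (ψ p.1))) :=
    Continuous.compCM (continuous_subtype_val.comp continuous_snd)
      ((Φ.toContinuousMap.curry.continuous).comp continuous_fst)
  set Q : C(unitInterval × CZero Y y₀, CZero X x₀) :=
    ⟨fun p => pullback (ψ p.1) (hψb p.1) p.2, Continuous.subtype_mk hQc _⟩ with hQdef
  have hconf : ∀ p : Config H X x₀ × unitInterval,
      IsConfig H ((p.1.1.comp Q).curry p.2) := by
    rintro ⟨⟨F, ⟨Φ₀, hΦ₀, n, hn⟩⟩, t⟩
    exact ⟨Φ₀.comp (pullbackHom (ψ t) (hψb t)), fun f => hΦ₀ _, n, fun f => hn _⟩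
  set Hht : Config H X x₀ × unitInterval → Config H Y y₀ :=
    fun p => ⟨(p.1.1.comp Q).curry p.2, hconf p⟩ with hHdef
  have happ : ∀ (F : Config H X x₀) (t : unitInterval) (f : CZero Y y₀),
      (Hht (F, t)).1 f = F.1 (pullback (ψ t) (hψb t) f) := fun F t f => rfl
  refine ⟨Hht, ?_, ?_, ?_, ?_⟩
  · -- continuity
    have hbase : Continuous fun p : Config H X x₀ × unitInterval =>
        (p.1.1.comp Q).curry p.2 := by
      rw [continuous_iff_continuousAt]
      rintro ⟨F₀, t₀⟩
      rw [ContinuousAt, ContinuousMap.tendsto_nhds_compactOpen]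
      intro K hK U hU hmapsto
      have hO : IsOpen {q : unitInterval × CZero Y y₀ | F₀.1 (Q q) ∈ U} :=
        hU.preimage (F₀.1.continuous.comp Q.continuous)
      have hsub : ({t₀} ×ˢ K) ⊆ {q : unitInterval × CZero Y y₀ | F₀.1 (Q q) ∈ U} := by
        rintro ⟨t, k⟩ ⟨ht, hk⟩
        simp only [Set.mem_singleton_iff] at ht
        subst ht
        exact hmapsto hk
      obtain ⟨T, V, hTo, hVo, hT₀, hKV, hTV⟩ :=
        generalized_tube_lemma isCompact_singleton hK hO hsub
      obtain ⟨T', hT'c, hT'i, hT'T⟩ := exists_compact_subset hTo (hT₀ rfl)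
      have hLc : IsCompact (Q '' (T' ×ˢ K)) := (hT'c.prod hK).image Q.continuous
      have hF₀ : Set.MapsTo F₀.1 (Q '' (T' ×ˢ K)) U := by
        rintro x ⟨⟨t, k⟩, ⟨ht, hk⟩, rfl⟩
        exact hTV ⟨hT'T ht, hKV hk⟩
      have hA : {F : Config H X x₀ | Set.MapsTo ⇑F.1 (Q '' (T' ×ˢ K)) U} ∈ nhds F₀ :=
        ((ContinuousMap.isOpen_setOf_mapsTo hLc hU).preimage
          continuous_subtype_val).mem_nhds hF₀
      have hB : interior T' ∈ nhds t₀ := isOpen_interior.mem_nhds hT'i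
      filter_upwards [prod_mem_nhds hA hB]
      rintro ⟨F, t⟩ ⟨hFA, htB⟩
      intro k hk
      show F.1 (Q (t, k)) ∈ U
      exact hFA ⟨(t, k), ⟨interior_subset htB, hk⟩, rfl⟩
    exact hbase.subtype_mk _
  · intro F f
    rw [happ]
    exact congrArg F.1 (pullback_congr _ _ (fun x => Φ.apply_zero x) f)
  · intro F f
    rw [happ]
    exact congrArg F.1 (pullback_congr _ _ (fun x => Φ.apply_one x) f)
  · intro g t F F' hF'
    funext f
    have key : pullback (⟨fun y => g • y, continuous_const_smul g⟩ : C(X, X)) (hx g)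
        (pullback (ψ t) (hψb t) f)
        = pullback (ψ t) (hψb t)
          (pullback (⟨fun y => g • y, continuous_const_smul g⟩ : C(Y, Y)) (hy g) f) := by
      apply Subtype.ext
      ext x
      show (f : C(Y, ℂ)) (ψ t (g • x)) = (f : C(Y, ℂ)) (g • ψ t x)
      have : ψ t (g • x) = g • ψ t x := hΦe t g x
      rw [this]
    have h1 : (Hht (F', t)).1 f = (smulConf H u hx g ⇑F.1) (pullback (ψ t) (hψb t) f) := by
      rw [happ]
      exact congrFun hF' _
    show (Hht (F', t)).1 f = _
    rw [h1]
    simp only [smulConf]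
    rw [key]
    rfl


end
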